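/- arXiv:1404.7671 — 9 statements merged into one kernel-verified Lean document; each statement's English description precedes it below -/
import Mathlib

section
/- Let m ≥ 1 be an integer and let p, q be real numbers with 0 < p, 0 < q and p ≠ q. Suppose μ : ℕ → ℝ satisfies μ(m) = 0, μ(0) = 1 + μ(1), and the recurrence (p + q)·μ(i) = 1 + p·μ(i+1) + q·μ(i−1) for all integers i with 1 ≤ i ≤ m−1. Then for every integer i with 0 ≤ i ≤ m, μ(i) = (1 + 1/(q − p)) · ((q/p)^m − (q/p)^i)/((q/p) − 1) − (m − i)/(q − p). -/
/-- Expected time to absorption for a birth-death chain with a reflecting barrier at `S 0`,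
constant up-probability `p` and down-probability `q` at interior states: the solution of
`μ m = 0`, `μ 0 = 1 + μ 1`, `(p+q)·μ i = 1 + p·μ (i+1) + q·μ (i-1)` for `1 ≤ i ≤ m-1`
is `μ i = (1 + 1/(q-p)) · ((q/p)^m - (q/p)^i)/((q/p) - 1) - (m - i)/(q - p)`. -/
theorem stmt_1 (m : ℕ) (hm : 1 ≤ m) (p q : ℝ) (hp : 0 < p) (hq : 0 < q) (hpq : p ≠ q)
    (μ : ℕ → ℝ) (hμm : μ m = 0) (hμ0 : μ 0 = 1 + μ 1)
    (hrec : ∀ i : ℕ, 1 ≤ i → i ≤ m - 1 →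
      (p + q) * μ i = 1 + p * μ (i + 1) + q * μ (i - 1)) :
    ∀ i : ℕ, i ≤ m →
      μ i = (1 + 1 / (q - p)) * (((q / p) ^ m - (q / p) ^ i) / (q / p - 1))
        - ((m : ℝ) - (i : ℝ)) / (q - p) := by
  have hp0 : p ≠ 0 := ne_of_gt hp
  have hqp : q - p ≠ 0 := sub_ne_zero.mpr (Ne.symm hpq)
  -- difference formula
  have hd : ∀ i : ℕ, i + 1 ≤ m →
      μ i - μ (i + 1) = (1 + 1 / (q - p)) * (q / p) ^ i - 1 / (q - p) := by
    intro i
    induction i with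
    | zero =>
      intro _
      rw [hμ0]
      field_simp
      ring
    | succ n ih =>
      intro h
      have hr := hrec (n + 1) (Nat.le_add_left 1 n) (by omega)
      have ihn := ih (by omega)
      have hn1 : n + 1 - 1 = n := by omega
      rw [hn1] at hr
      have key : p * (μ (n + 1) - μ (n + 1 + 1))
          = 1 + q * ((1 + 1 / (q - p)) * (q / p) ^ n - 1 / (q - p)) := by
        rw [← ihn]; linear_combination hr
      have alg : p * ((1 + 1 / (q - p)) * (q / p) ^ (n + 1) - 1 / (q - p))
          = 1 + q * ((1 + 1 / (q - p)) * (q / p) ^ n - 1 / (q - p)) := by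
        rw [pow_succ]; field_simp; ring
      exact mul_left_cancel₀ hp0 (key.trans alg.symm)
  -- downward induction
  have main : ∀ j : ℕ, j ≤ m →
      μ (m - j) = (1 + 1 / (q - p)) * (((q / p) ^ m - (q / p) ^ (m - j)) / (q / p - 1))
        - ((m : ℝ) - ((m - j : ℕ) : ℝ)) / (q - p) := by
    intro j
    induction j with
    | zero => intro _; rw [Nat.sub_zero, hμm]; simp
    | succ j ih =>
      intro h
      have hi1 : m - (j + 1) + 1 = m - j := by omega
      have ihj := ih (by omega)
      have hdj := hd (m - (j + 1)) (by omega)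
      rw [← hi1] at ihj
      have hcast : ((m - (j + 1) + 1 : ℕ) : ℝ) = ((m - (j + 1) : ℕ) : ℝ) + 1 := by
        push_cast; ring
      rw [hcast] at ihj
      have hmu : μ (m - (j + 1)) = μ (m - (j + 1) + 1)
          + ((1 + 1 / (q - p)) * (q / p) ^ (m - (j + 1)) - 1 / (q - p)) := by
        linarith [hdj]
      rw [hmu, ihj, pow_succ]
      field_simp
      ring
  intro i hi
  have h := main (m - i) (by omega)
  have : m - (m - i) = i := by omega
  rwa [this] at h
end

section
/- Let m ≥ 1 be an integer and let p, q be real numbers with 0 < q < p and p + q ≤ 1. Suppose μ : ℕ → ℝ satisfies μ(m) = 0, μ(0) = 1 + μ(1), and the recurrence (p + q)·μ(i) = 1 + p·μ(i+1) + q·μ(i−1) for all integers i with 1 ≤ i ≤ m−1. Then for every integer i with 0 ≤ i ≤ m, μ(i) ≤ (m − i)/(p − q). -/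
/-- Part (a) of the expected-time-to-absorption lemma: if the backward bias `q/p` is
less than one, the expected hitting time of `S m` from `S i` is at most `(m - i)/(p - q)`. -/
theorem stmt_2 (m : ℕ) (hm : 1 ≤ m) (p q : ℝ) (hq : 0 < q) (hqp : q < p) (hpq1 : p + q ≤ 1)
    (μ : ℕ → ℝ) (hμm : μ m = 0) (hμ0 : μ 0 = 1 + μ 1)
    (hrec : ∀ i : ℕ, 1 ≤ i → i ≤ m - 1 →
      (p + q) * μ i = 1 + p * μ (i + 1) + q * μ (i - 1)) :
    ∀ i : ℕ, i ≤ m → μ i ≤ ((m : ℝ) - (i : ℝ)) / (p - q) := by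
  have hpq : (0:ℝ) < p - q := by linarith
  have hp : (0:ℝ) < p := by linarith
  have hd : ∀ i : ℕ, i ≤ m - 1 → μ i - μ (i + 1) ≤ 1 / (p - q) := by
    intro i
    induction i with
    | zero =>
      intro _
      rw [le_div_iff₀ hpq]; nlinarith
    | succ n ih =>
      intro hle
      have h1 : (p + q) * μ (n + 1) = 1 + p * μ (n + 2) + q * μ n := by
        have := hrec (n + 1) (by omega) hle
        simpa using this
      have h2 := ih (by omega)
      rw [le_div_iff₀ hpq] at h2 ⊢
      nlinarith
  have key : ∀ j : ℕ, j ≤ m → μ (m - j) ≤ (j : ℝ) / (p - q) := by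
    intro j
    induction j with
    | zero => intro _; simpa [hμm]
    | succ n ih =>
      intro hle
      have h1 := ih (by omega)
      have h2 := hd (m - (n + 1)) (by omega)
      have he : m - (n + 1) + 1 = m - n := by omega
      rw [he] at h2
      have : μ (m - (n + 1)) ≤ 1 / (p - q) + (n : ℝ) / (p - q) := by linarith
      calc μ (m - (n + 1)) ≤ 1 / (p - q) + (n : ℝ) / (p - q) := this
        _ = ((n : ℝ) + 1) / (p - q) := by ring
        _ = ((n + 1 : ℕ) : ℝ) / (p - q) := by push_cast; ring
  intro i hi
  have := key (m - i) (by omega)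
  have he : m - (m - i) = i := by omega
  rw [he] at this
  have hc : ((m - i : ℕ) : ℝ) = (m : ℝ) - (i : ℝ) := by
    push_cast [Nat.cast_sub hi]; ring
  rwa [hc] at this
end

section
/- Let m ≥ 1 be an integer and let p, q be real numbers with 0 < p < q and p + q ≤ 1. Suppose μ : ℕ → ℝ satisfies μ(m) = 0, μ(0) = 1 + μ(1), and the recurrence (p + q)·μ(i) = 1 + p·μ(i+1) + q·μ(i−1) for all integers i with 1 ≤ i ≤ m−1. Then μ(1) ≥ ((q/p)^m − (q/p))/((q/p) − 1) − (m − 1)/(q − p). -/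
/-- Part (b) of the expected-time-to-absorption lemma: if the backward bias `q/p` exceeds
one, the expected hitting time of `S m` from `S 1` is at least
`((q/p)^m - (q/p))/((q/p) - 1) - (m - 1)/(q - p)`. -/
theorem stmt_3 (m : ℕ) (hm : 1 ≤ m) (p q : ℝ) (hp : 0 < p) (hpq : p < q) (hpq1 : p + q ≤ 1)
    (μ : ℕ → ℝ) (hμm : μ m = 0) (hμ0 : μ 0 = 1 + μ 1)
    (hrec : ∀ i : ℕ, 1 ≤ i → i ≤ m - 1 →
      (p + q) * μ i = 1 + p * μ (i + 1) + q * μ (i - 1)) :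
    μ 1 ≥ ((q / p) ^ m - q / p) / (q / p - 1) - ((m : ℝ) - 1) / (q - p) := by
  have hq : 0 < q := hp.trans hpq
  have hqp : (0:ℝ) < q - p := by linarith
  have hp' : p ≠ 0 := ne_of_gt hp
  have hqp' : q - p ≠ 0 := ne_of_gt hqp
  set r := q / p with hr
  have hr1 : 1 < r := (one_lt_div hp).2 hpq
  have hr0 : 0 < r := by linarith
  have hpr : p * r = q := by rw [hr]; field_simp
  set c := 1 + 1/(q-p) with hc
  have hc1 : 1 ≤ c := by
    have : 0 < 1/(q-p) := by positivity
    simp [hc]; linarith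
  -- difference formula
  have hA : ∀ i, i + 1 ≤ m → μ i - μ (i+1) = c * r ^ i - 1/(q-p) := by
    intro i
    induction i with
    | zero =>
      intro _
      simp only [pow_zero, mul_one, hc]
      linarith [hμ0]
    | succ n ih =>
      intro h
      have ihn := ih (by omega)
      have hrecn := hrec (n+1) (by omega) (by omega)
      simp only [Nat.add_sub_cancel] at hrecn
      have h1 : p * (μ (n+1) - μ (n+2)) = 1 + q * (μ n - μ (n+1)) := by linarith
      rw [ihn] at h1
      have h2 : p * (c * r ^ (n+1) - 1/(q-p)) = 1 + q * (c * r ^ n - 1/(q-p)) := by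
        have h3 : p * (c * r ^ (n+1)) = q * (c * r ^ n) := by
          rw [pow_succ]; linear_combination (c * r ^ n) * hpr
        have hone : p * (1/(q-p)) - q * (1/(q-p)) = -1 := by field_simp; ring
        linear_combination h3 - hone
      have := mul_left_cancel₀ hp' (h1.trans h2.symm)
      linarith
  -- summed formula
  have hB : ∀ k, 1 ≤ k → k ≤ m → μ 1 - μ k = c * (r ^ k - r) / (r - 1) - ((k:ℝ) - 1)/(q-p) := by
    intro k
    induction k with
    | zero => omega
    | succ n ih =>
      intro _ h
      rcases Nat.eq_or_lt_of_le (show 1 ≤ n + 1 from by omega) with h1 | h1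
      · obtain rfl : n = 0 := by omega
        norm_num
      · have hn1 : 1 ≤ n := by omega
        have ihn := ih hn1 (by omega)
        have hAn := hA n (by omega)
        have key : c * (r ^ (n+1) - r) / (r - 1) - c * (r ^ n - r) / (r - 1) = c * r ^ n := by
          have hr1' : r - 1 ≠ 0 := by linarith
          field_simp
          ring
        push_cast
        have : ((n:ℝ) + 1 - 1)/(q-p) = ((n:ℝ) - 1)/(q-p) + 1/(q-p) := by
          field_simp
          ring
        rw [this]
        linarith
  have hBm := hB m hm le_rfl
  rw [hμm, sub_zero] at hBm
  -- final estimate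
  have hgeom : 0 ≤ (r ^ m - r) / (r - 1) := by
    apply div_nonneg _ (by linarith)
    have : r ^ 1 ≤ r ^ m := pow_le_pow_right₀ (by linarith) hm
    simpa using by linarith [this]
  rw [hBm]
  have : (r ^ m - r) / (r - 1) ≤ c * (r ^ m - r) / (r - 1) := by
    rw [mul_div_assoc]
    exact le_mul_of_one_le_left hgeom hc1
  linarith
end

section
/- Let k and ℓ be integers with 1 ≤ k < ℓ. Then Σ_{i=1}^{k} 1/((ℓ − i + 1)·(k − i + 1)) ≤ (1 + ln k)/(ℓ − k), where ln denotes the natural logarithm. -/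
/-- The key estimate in the running-time analysis of the 4-state ambassador protocol on
the clique: for integers `1 ≤ k < ℓ`,
`∑_{i=1}^{k} 1/((ℓ-i+1)(k-i+1)) ≤ (1 + ln k)/(ℓ-k)`. -/
theorem stmt_7 (k l : ℕ) (hk : 1 ≤ k) (hkl : k < l) :
    ∑ i ∈ Finset.Icc 1 k,
        (1 : ℝ) / (((l : ℝ) - (i : ℝ) + 1) * ((k : ℝ) - (i : ℝ) + 1))
      ≤ (1 + Real.log k) / ((l : ℝ) - (k : ℝ)) := by
  have hlk : (0 : ℝ) < (l : ℝ) - (k : ℝ) := by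
    have : (k : ℝ) < l := by exact_mod_cast hkl
    linarith
  have step1 : ∑ i ∈ Finset.Icc 1 k,
      (1 : ℝ) / (((l : ℝ) - (i : ℝ) + 1) * ((k : ℝ) - (i : ℝ) + 1))
      ≤ ∑ i ∈ Finset.Icc 1 k, (1 : ℝ) / (((l : ℝ) - (k : ℝ)) * ((k : ℝ) - (i : ℝ) + 1)) := by
    apply Finset.sum_le_sum
    intro i hi
    rw [Finset.mem_Icc] at hi
    have hik : (i : ℝ) ≤ (k : ℝ) := by exact_mod_cast hi.2
    have h1 : (0 : ℝ) < (k : ℝ) - (i : ℝ) + 1 := by linarith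
    have h2 : (l : ℝ) - (k : ℝ) ≤ (l : ℝ) - (i : ℝ) + 1 := by linarith
    apply one_div_le_one_div_of_le
    · positivity
    · exact mul_le_mul_of_nonneg_right h2 h1.le
  have step2 : ∑ i ∈ Finset.Icc 1 k, (1 : ℝ) / (((l : ℝ) - (k : ℝ)) * ((k : ℝ) - (i : ℝ) + 1))
      = (∑ i ∈ Finset.Icc 1 k, (1 : ℝ) / ((k : ℝ) - (i : ℝ) + 1)) / ((l : ℝ) - (k : ℝ)) := by
    rw [Finset.sum_div]
    apply Finset.sum_congr rfl
    intro i _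
    rw [one_div, mul_inv]; ring
  have step3 : ∑ i ∈ Finset.Icc 1 k, (1 : ℝ) / ((k : ℝ) - (i : ℝ) + 1)
      = ∑ j ∈ Finset.Icc 1 k, (1 : ℝ) / (j : ℝ) := by
    apply Finset.sum_nbij' (fun i => k + 1 - i) (fun j => k + 1 - j)
    all_goals intro a ha
    all_goals simp only [Finset.mem_Icc] at *
    · omega
    · omega
    · omega
    · omega
    · obtain ⟨h1, h2⟩ := ha
      have : ((k + 1 - a : ℕ) : ℝ) = (k : ℝ) - (a : ℝ) + 1 := by
        push_cast [Nat.cast_sub (by omega : a ≤ k + 1)]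
        ring
      rw [this]
  have step4 : ∑ j ∈ Finset.Icc 1 k, (1 : ℝ) / (j : ℝ) ≤ 1 + Real.log k := by
    have h := harmonic_le_one_add_log k
    rw [harmonic_eq_sum_Icc] at h
    calc ∑ j ∈ Finset.Icc 1 k, (1 : ℝ) / (j : ℝ)
        = ((∑ i ∈ Finset.Icc 1 k, ((i : ℚ))⁻¹ : ℚ) : ℝ) := by
          push_cast
          simp [one_div]
      _ ≤ 1 + Real.log k := h
  calc ∑ i ∈ Finset.Icc 1 k,
        (1 : ℝ) / (((l : ℝ) - (i : ℝ) + 1) * ((k : ℝ) - (i : ℝ) + 1))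
      ≤ (∑ i ∈ Finset.Icc 1 k, (1 : ℝ) / ((k : ℝ) - (i : ℝ) + 1)) / ((l : ℝ) - (k : ℝ)) := by
        rw [← step2]; exact step1
    _ = (∑ j ∈ Finset.Icc 1 k, (1 : ℝ) / (j : ℝ)) / ((l : ℝ) - (k : ℝ)) := by
        rw [step3]
    _ ≤ (1 + Real.log k) / ((l : ℝ) - (k : ℝ)) := by
        gcongr
end

section
/- There is no population protocol with exactly 3 states that stably computes the majority function in every 2-type population on every connected interaction graph. Precisely: for every state set Q with |Q| = 3, every transition function δ : Q × Q → Q × Q, every pair of distinct input states ι(g), ι(r) ∈ Q and every output function γ : Q → {g, r}, there exist a connected interaction graph G = (V, E), an initial configuration C_0 assigning each vertex one of ι(g), ι(r) with one of the two input types in strict majority, and a fair execution starting from C_0 that never reaches a configuration C such that γ(C(v)) equals the initial majority type for all v ∈ V and such that every configuration reachable from C also has this property. -/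
/-- One interaction step of a population protocol with transition function `δ` on an
interaction graph with edge relation `E`: some edge `(v,u)` is selected and the pair of
states of `v` and `u` is updated according to `δ`, all other agents being unchanged. -/
def PPStep {V Q : Type*} (E : V → V → Prop) (δ : Q × Q → Q × Q) (C C' : V → Q) : Prop :=
  ∃ v u : V, v ≠ u ∧ E v u ∧ (C' v, C' u) = δ (C v, C u) ∧
    ∀ w : V, w ≠ v → w ≠ u → C' w = C w

/-- An execution of the protocol: at each time step either an interaction happens or the
configuration stays put (an interaction that changes nothing). -/
def PPExec {V Q : Type*} (E : V → V → Prop) (δ : Q × Q → Q × Q) (e : ℕ → V → Q) : Prop :=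
  ∀ t : ℕ, PPStep E δ (e t) (e (t + 1)) ∨ e (t + 1) = e t

/-- Fairness: any configuration directly reachable from a configuration occurring
infinitely often also occurs infinitely often. -/
def PPFair {V Q : Type*} (E : V → V → Prop) (δ : Q × Q → Q × Q) (e : ℕ → V → Q) : Prop :=
  ∀ C C' : V → Q, (∀ n : ℕ, ∃ t : ℕ, n ≤ t ∧ e t = C) → PPStep E δ C C' →
    ∀ n : ℕ, ∃ t : ℕ, n ≤ t ∧ e t = C'

/-- Configuration `C` is a stable correct output configuration for output value `b`:
every vertex outputs `b` in `C` and in every configuration reachable from `C`. -/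
def PPStableOutput {V Q : Type*} (E : V → V → Prop) (δ : Q × Q → Q × Q)
    (γ : Q → Bool) (b : Bool) (C : V → Q) : Prop :=
  ∀ C' : V → Q, Relation.ReflTransGen (PPStep E δ) C C' → ∀ v : V, γ (C' v) = b

section Fair
variable {V Q : Type*} [Fintype V] [DecidableEq V] [Fintype Q] [DecidableEq Q]
  (E : V → V → Prop) (δ : Q × Q → Q × Q)

open Classical in
noncomputable def succList (C : V → Q) : List (V → Q) :=
  (Finset.univ.filter (fun C' => PPStep E δ C C')).toList

lemma mem_succList {C C' : V → Q} : C' ∈ succList E δ C ↔ PPStep E δ C C' := by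
  classical
  rw [succList, Finset.mem_toList, Finset.mem_filter]
  simp

noncomputable def feAux (C0 : V → Q) : ℕ → (V → Q) × ((V → Q) → ℕ)
  | 0 => (C0, fun _ => 0)
  | (t+1) =>
      let s := feAux C0 t
      let L := succList E δ s.1
      (L.getD (s.2 s.1 % L.length) s.1, Function.update s.2 s.1 (s.2 s.1 + 1))

noncomputable def fe (C0 : V → Q) (t : ℕ) : V → Q := (feAux E δ C0 t).1

lemma feAux_cnt (C0 : V → Q) (t : ℕ) :
    ∀ C, (feAux E δ C0 t).2 C = Nat.count (fun s => fe E δ C0 s = C) t := by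
  induction t with
  | zero => intro C; simp [feAux]
  | succ t ih =>
      intro C
      show Function.update (feAux E δ C0 t).2 (feAux E δ C0 t).1
        ((feAux E δ C0 t).2 (feAux E δ C0 t).1 + 1) C
        = Nat.count (fun s => fe E δ C0 s = C) (t + 1)
      rw [Nat.count_succ, Function.update_apply]
      by_cases h : C = (feAux E δ C0 t).1
      · rw [if_pos h, if_pos (show fe E δ C0 t = C from h.symm), h, ih]
      · rw [if_neg h, ih, if_neg (show ¬ fe E δ C0 t = C from fun hc => h hc.symm), add_zero]

lemma fe_zero (C0 : V → Q) : fe E δ C0 0 = C0 := rfl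

lemma fe_succ (C0 : V → Q) (t : ℕ) :
    fe E δ C0 (t + 1) = (succList E δ (fe E δ C0 t)).getD
      ((feAux E δ C0 t).2 (fe E δ C0 t) % (succList E δ (fe E δ C0 t)).length)
      (fe E δ C0 t) := rfl

lemma fe_exec (C0 : V → Q) : PPExec E δ (fe E δ C0) := by
  intro t
  rw [fe_succ]
  set L := succList E δ (fe E δ C0 t) with hL
  by_cases h : L = []
  · right; rw [h]; rfl
  · left
    have hlen : 0 < L.length := List.length_pos_iff.2 h
    have hlt : (feAux E δ C0 t).2 (fe E δ C0 t) % L.length < L.length := Nat.mod_lt _ hlen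
    rw [List.getD_eq_getElem L _ hlt]
    exact (mem_succList E δ).1 (List.getElem_mem hlt)

lemma fe_fair (C0 : V → Q) : PPFair E δ (fe E δ C0) := by
  classical
  intro C C' hio hstep n
  set p : ℕ → Prop := fun s => fe E δ C0 s = C with hp_def
  have hp : (setOf p).Infinite := by
    by_contra hfin
    rw [Set.not_infinite] at hfin
    obtain ⟨b, hb⟩ := hfin.bddAbove
    obtain ⟨t, hbt, ht⟩ := hio (b + 1)
    exact absurd (hb (show t ∈ setOf p from ht)) (by omega)
  set L := succList E δ C with hL_def
  have hmem : C' ∈ L := (mem_succList E δ).2 hstep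
  have hi0 : L.idxOf C' < L.length := List.idxOf_lt_length_iff.2 hmem
  have hlen : 0 < L.length := lt_of_le_of_lt (Nat.zero_le _) hi0
  set k := L.idxOf C' + L.length * n with hk_def
  have hkn : n ≤ k := le_trans (Nat.le_mul_of_pos_left n hlen) (Nat.le_add_left _ _)
  set t := Nat.nth p k with ht_def
  have hpt : fe E δ C0 t = C := Nat.nth_mem_of_infinite hp k
  have hcnt : Nat.count p t = k := Nat.count_nth_of_infinite hp k
  have hkt : k ≤ t := (Nat.nth_strictMono hp).le_apply
  refine ⟨t + 1, by omega, ?_⟩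
  have h2 : (feAux E δ C0 t).2 (fe E δ C0 t) = k := by
    rw [feAux_cnt, hpt]
    exact hcnt
  rw [hpt] at h2
  rw [fe_succ, hpt, ← hL_def, h2, hk_def, Nat.add_mul_mod_self_left, Nat.mod_eq_of_lt hi0,
    List.getD_eq_getElem L _ hi0, List.getElem_idxOf hi0]

end Fair

section Reach
variable {V Q : Type*} [Fintype V] [DecidableEq V] [Fintype Q] [DecidableEq Q]
  {E : V → V → Prop} {δ : Q × Q → Q × Q}

lemma exec_reach {e : ℕ → V → Q} (he : PPExec E δ e) {s t : ℕ} (hst : s ≤ t) :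
    Relation.ReflTransGen (PPStep E δ) (e s) (e t) := by
  induction t with
  | zero => rw [Nat.le_zero.1 hst]
  | succ t ih =>
      rcases Nat.lt_or_ge s (t+1) with h | h
      · have h' := ih (Nat.lt_succ_iff.1 h)
        rcases he t with hstep | heq
        · exact h'.tail hstep
        · rwa [heq]
      · rw [Nat.le_antisymm hst h]

lemma fair_prepend {e : ℕ → V → Q} {C0 : V → Q} (h : PPStep E δ C0 (e 0))
    (hex : PPExec E δ e) (hfa : PPFair E δ e) :
    ∃ e' : ℕ → V → Q, e' 0 = C0 ∧ (∀ t, e' (t+1) = e t) ∧ PPExec E δ e' ∧ PPFair E δ e' := by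
  refine ⟨fun t => Nat.casesOn t C0 e, rfl, fun t => rfl, ?_, ?_⟩
  · intro t
    cases t with
    | zero => exact Or.inl h
    | succ t => exact hex t
  · intro C C' hio hstep n
    have hio' : ∀ m : ℕ, ∃ t, m ≤ t ∧ e t = C := by
      intro m
      obtain ⟨t, hmt, ht⟩ := hio (m + 1)
      cases t with
      | zero => omega
      | succ t => exact ⟨t, by omega, ht⟩
    obtain ⟨t, hnt, ht⟩ := hfa C C' hio' hstep n
    exact ⟨t + 1, by omega, ht⟩

lemma fair_through {C0 C1 : V → Q} (h : Relation.ReflTransGen (PPStep E δ) C0 C1) :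
    ∃ (e : ℕ → V → Q) (T : ℕ), e 0 = C0 ∧ e T = C1 ∧ PPExec E δ e ∧ PPFair E δ e := by
  induction h using Relation.ReflTransGen.head_induction_on with
  | refl => exact ⟨fe E δ C1, 0, rfl, rfl, fe_exec E δ C1, fe_fair E δ C1⟩
  | head hstep _ ih =>
      obtain ⟨e, T, he0, heT, hex, hfa⟩ := ih
      rw [← he0] at hstep
      obtain ⟨e', he'0, he's, hex', hfa'⟩ := fair_prepend hstep hex hfa
      exact ⟨e', T + 1, he'0, by rw [he's, heT], hex', hfa'⟩

lemma noStable {γ : Q → Bool} {b : Bool} {C0 C1 : V → Q}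
    (hreach : Relation.ReflTransGen (PPStep E δ) C0 C1)
    (H : ∀ C, Relation.ReflTransGen (PPStep E δ) C1 C →
      ∃ (C' : V → Q) (v : V), Relation.ReflTransGen (PPStep E δ) C C' ∧ γ (C' v) ≠ b) :
    ∃ e : ℕ → V → Q, e 0 = C0 ∧ PPExec E δ e ∧ PPFair E δ e ∧
      ∀ t : ℕ, ¬ PPStableOutput E δ γ b (e t) := by
  obtain ⟨e, T, he0, heT, hex, hfa⟩ := fair_through hreach
  refine ⟨e, he0, hex, hfa, ?_⟩
  intro t hst
  rcases le_total t T with h | h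
  · obtain ⟨C', v, hC', hne⟩ := H C1 (Relation.ReflTransGen.refl)
    have : Relation.ReflTransGen (PPStep E δ) (e t) C' :=
      ((heT ▸ exec_reach hex h).trans hC')
    exact hne (hst C' this v)
  · obtain ⟨C', v, hC', hne⟩ := H (e t) (heT ▸ exec_reach hex h)
    exact hne (hst C' hC' v)

end Reach

section Comb
variable {Q : Type} [Fintype Q] [DecidableEq Q]

/-- The configuration on `Fin n` whose first `m` agents are in state `qg`, the rest `qr`. -/
def cfg (qg qr : Q) (n m : ℕ) : Fin n → Q := fun v => if (v : ℕ) < m then qg else qr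

/-- Extend a configuration on the path of length 3 to the path of length 5 by `qr`'s. -/
def emb (qr : Q) (C : Fin 3 → Q) : Fin 5 → Q :=
  fun v => if h : (v : ℕ) < 3 then C ⟨v, h⟩ else qr

lemma emb_lt (qr : Q) (C : Fin 3 → Q) (v : Fin 5) (h : (v : ℕ) < 3) :
    emb qr C v = C ⟨v, h⟩ := dif_pos h

lemma emb_ge (qr : Q) (C : Fin 3 → Q) (v : Fin 5) (h : ¬ (v : ℕ) < 3) :
    emb qr C v = qr := dif_neg h

lemma lift_step (δ : Q × Q → Q × Q) (qr : Q) {C C' : Fin 3 → Q}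
    (h : PPStep (SimpleGraph.pathGraph 3).Adj δ C C') :
    PPStep (SimpleGraph.pathGraph 5).Adj δ (emb qr C) (emb qr C') := by
  obtain ⟨v, u, hvu, hadj, hδ, hrest⟩ := h
  refine ⟨⟨(v : ℕ), by omega⟩, ⟨(u : ℕ), by omega⟩, ?_, ?_, ?_, ?_⟩
  · intro hc
    exact hvu (Fin.ext (show (v : ℕ) = (u : ℕ) from congrArg (fun x : Fin 5 => (x : ℕ)) hc))
  · rw [SimpleGraph.pathGraph_adj] at hadj ⊢
    exact hadj
  · rw [emb_lt qr C' _ v.isLt, emb_lt qr C' _ u.isLt,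
      emb_lt qr C _ v.isLt, emb_lt qr C _ u.isLt]
    exact hδ
  · intro w hw1 hw2
    by_cases hw : (w : ℕ) < 3
    · rw [emb_lt qr C' w hw, emb_lt qr C w hw]
      exact hrest ⟨(w : ℕ), hw⟩
        (fun hc => hw1 (by apply Fin.ext; exact congrArg (fun x : Fin 3 => (x : ℕ)) hc))
        (fun hc => hw2 (by apply Fin.ext; exact congrArg (fun x : Fin 3 => (x : ℕ)) hc))
    · rw [emb_ge qr C' w hw, emb_ge qr C w hw]

lemma lift_reach (δ : Q × Q → Q × Q) (qr : Q) {C C' : Fin 3 → Q}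
    (h : Relation.ReflTransGen (PPStep (SimpleGraph.pathGraph 3).Adj δ) C C') :
    Relation.ReflTransGen (PPStep (SimpleGraph.pathGraph 5).Adj δ) (emb qr C) (emb qr C') :=
  Relation.ReflTransGen.lift (emb qr) (fun _ _ hs => lift_step δ qr hs) _ _ h

lemma cfg_valid (qg qr : Q) (n m : ℕ) : ∀ v, cfg qg qr n m v = qg ∨ cfg qg qr n m v = qr := by
  intro v
  unfold cfg
  split
  · exact Or.inl rfl
  · exact Or.inr rfl

lemma cfg_filter_g {qg qr : Q} (hgr : qg ≠ qr) (n m : ℕ) :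
    (Finset.univ.filter fun v => cfg qg qr n m v = qg)
      = (Finset.univ.filter fun v : Fin n => (v : ℕ) < m) := by
  ext v
  simp only [Finset.mem_filter, Finset.mem_univ, true_and, cfg]
  by_cases h : (v : ℕ) < m
  · simp [h]
  · simp [h, Ne.symm hgr]

lemma cfg_filter_r {qg qr : Q} (hgr : qg ≠ qr) (n m : ℕ) :
    (Finset.univ.filter fun v => cfg qg qr n m v = qr)
      = (Finset.univ.filter fun v : Fin n => ¬ (v : ℕ) < m) := by
  ext v
  simp only [Finset.mem_filter, Finset.mem_univ, true_and, cfg]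
  by_cases h : (v : ℕ) < m
  · simp [h, hgr]
  · simp [h]

lemma exists_third (hQ : Fintype.card Q = 3) {qg qr : Q} (hgr : qg ≠ qr) :
    ∃ x : Q, x ≠ qg ∧ x ≠ qr ∧ ∀ q : Q, q = qg ∨ q = qr ∨ q = x := by
  classical
  have hcard : ({qg, qr} : Finset Q).card = 2 := by
    rw [Finset.card_insert_of_notMem (by simpa using hgr), Finset.card_singleton]
  have h1 : (Finset.univ \ ({qg, qr} : Finset Q)).card = 1 := by
    rw [Finset.card_sdiff_of_subset (Finset.subset_univ _), Finset.card_univ, hQ, hcard]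
  obtain ⟨x, hx⟩ := Finset.card_eq_one.1 h1
  have hxmem : x ∈ Finset.univ \ ({qg, qr} : Finset Q) := by
    rw [hx]; exact Finset.mem_singleton_self x
  rw [Finset.mem_sdiff, Finset.mem_insert, Finset.mem_singleton] at hxmem
  refine ⟨x, fun h => hxmem.2 (Or.inl h), fun h => hxmem.2 (Or.inr h), ?_⟩
  intro q
  by_cases h1' : q = qg
  · exact Or.inl h1'
  by_cases h2' : q = qr
  · exact Or.inr (Or.inl h2')
  refine Or.inr (Or.inr ?_)
  have hq : q ∈ Finset.univ \ ({qg, qr} : Finset Q) := by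
    rw [Finset.mem_sdiff]
    exact ⟨Finset.mem_univ q, by simp [h1', h2']⟩
  rw [hx, Finset.mem_singleton] at hq
  exact hq

lemma bool_flip {a b : ℕ} (h : a ≠ b) : (!(decide (b < a))) = decide (a < b) := by
  by_cases h1 : a < b <;> by_cases h2 : b < a <;> first | omega | simp [h1, h2]

end Comb

lemma aux_main {Q : Type} [Fintype Q] [DecidableEq Q]
    (δ : Q × Q → Q × Q) (qg qr : Q) (hgr : qg ≠ qr) (γ : Q → Bool)
    (hu : ∀ q : Q, γ q = true → q = qg) :
    ∃ (n : ℕ) (G : SimpleGraph (Fin n)) (C0 : Fin n → Q) (e : ℕ → Fin n → Q),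
      G.Connected ∧
      (∀ v : Fin n, C0 v = qg ∨ C0 v = qr) ∧
      (Finset.univ.filter fun v => C0 v = qg).card ≠
        (Finset.univ.filter fun v => C0 v = qr).card ∧
      e 0 = C0 ∧ PPExec G.Adj δ e ∧ PPFair G.Adj δ e ∧
      ∀ t : ℕ, ¬ PPStableOutput G.Adj δ γ
        (decide ((Finset.univ.filter fun v => C0 v = qr).card <
                 (Finset.univ.filter fun v => C0 v = qg).card)) (e t) := by
  classical
  by_cases h1 : Relation.ReflTransGen (PPStep (SimpleGraph.pathGraph 3).Adj δ)
      (cfg qg qr 3 2) (fun _ => qg)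
  · -- all-g is reachable from (g,g,r) on the path of length 3
    have e1 : emb qr (cfg qg qr 3 2) = cfg qg qr 5 2 := by
      funext v
      by_cases h : (v : ℕ) < 3
      · rw [emb_lt qr _ v h]; rfl
      · rw [emb_ge qr _ v h]
        show _ = if (v : ℕ) < 2 then qg else qr
        rw [if_neg (by omega)]
    have e2 : emb qr (fun _ => qg) = cfg qg qr 5 3 := by
      funext v
      by_cases h : (v : ℕ) < 3
      · rw [emb_lt qr _ v h]
        show _ = if (v : ℕ) < 3 then qg else qr
        rw [if_pos h]
      · rw [emb_ge qr _ v h]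
        show _ = if (v : ℕ) < 3 then qg else qr
        rw [if_neg h]
    have hD : Relation.ReflTransGen (PPStep (SimpleGraph.pathGraph 5).Adj δ)
        (cfg qg qr 5 2) (cfg qg qr 5 3) := by
      rw [← e1, ← e2]; exact lift_reach δ qr h1
    have hcg3 : (Finset.univ.filter fun v => cfg qg qr 5 3 v = qg).card = 3 := by
      rw [cfg_filter_g hgr]; decide
    have hcr3 : (Finset.univ.filter fun v => cfg qg qr 5 3 v = qr).card = 2 := by
      rw [cfg_filter_r hgr]; decide
    have hcg2 : (Finset.univ.filter fun v => cfg qg qr 5 2 v = qg).card = 2 := by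
      rw [cfg_filter_g hgr]; decide
    have hcr2 : (Finset.univ.filter fun v => cfg qg qr 5 2 v = qr).card = 3 := by
      rw [cfg_filter_r hgr]; decide
    by_cases h2 : ∃ Cs : Fin 5 → Q,
        Relation.ReflTransGen (PPStep (SimpleGraph.pathGraph 5).Adj δ) (cfg qg qr 5 3) Cs ∧
        ∀ C', Relation.ReflTransGen (PPStep (SimpleGraph.pathGraph 5).Adj δ) Cs C' →
          ∀ v, γ (C' v) = false
    · -- a stable all-false configuration is reachable from D = (g,g,g,r,r):
      -- use D itself as a (g-majority) input
      obtain ⟨Cs, hDCs, hCs⟩ := h2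
      obtain ⟨e, he0, hex, hfa, hnst⟩ := noStable (γ := γ) (b := true) hDCs
        (fun C hC => ⟨C, 0, Relation.ReflTransGen.refl, by rw [hCs C hC 0]; decide⟩)
      refine ⟨5, SimpleGraph.pathGraph 5, cfg qg qr 5 3, e,
        SimpleGraph.pathGraph_connected 4, cfg_valid qg qr 5 3, ?_, he0, hex, hfa, ?_⟩
      · rw [hcg3, hcr3]; decide
      · have hb : (decide ((Finset.univ.filter fun v => cfg qg qr 5 3 v = qr).card <
            (Finset.univ.filter fun v => cfg qg qr 5 3 v = qg).card)) = true := by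
          rw [hcg3, hcr3]; decide
        rw [hb]
        exact hnst
    · -- no stable all-false configuration is reachable from D:
      -- use C5 = (g,g,r,r,r) (an r-majority input), which reaches D
      push_neg at h2
      obtain ⟨e, he0, hex, hfa, hnst⟩ := noStable (γ := γ) (b := false) hD
        (fun C hC => by
          obtain ⟨C', hC', v, hv⟩ := h2 C hC
          exact ⟨C', v, hC', hv⟩)
      refine ⟨5, SimpleGraph.pathGraph 5, cfg qg qr 5 2, e,
        SimpleGraph.pathGraph_connected 4, cfg_valid qg qr 5 2, ?_, he0, hex, hfa, ?_⟩
      · rw [hcg2, hcr2]; decide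
      · have hb : (decide ((Finset.univ.filter fun v => cfg qg qr 5 2 v = qr).card <
            (Finset.univ.filter fun v => cfg qg qr 5 2 v = qg).card)) = false := by
          rw [hcg2, hcr2]; decide
        rw [hb]
        exact hnst
  · -- all-g is not reachable from (g,g,r) on the path of length 3
    have hcg : (Finset.univ.filter fun v => cfg qg qr 3 2 v = qg).card = 2 := by
      rw [cfg_filter_g hgr]; decide
    have hcr : (Finset.univ.filter fun v => cfg qg qr 3 2 v = qr).card = 1 := by
      rw [cfg_filter_r hgr]; decide
    obtain ⟨e, he0, hex, hfa, hnst⟩ := noStable (γ := γ) (b := true)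
      (Relation.ReflTransGen.refl (a := cfg qg qr 3 2))
      (fun C hC => by
        by_contra hall
        push_neg at hall
        apply h1
        have : C = fun _ => qg := by
          funext v
          refine hu (C v) ?_
          have h' := hall C v Relation.ReflTransGen.refl
          revert h'
          cases γ (C v) <;> simp
        rw [← this]
        exact hC)
    refine ⟨3, SimpleGraph.pathGraph 3, cfg qg qr 3 2, e,
      SimpleGraph.pathGraph_connected 2, cfg_valid qg qr 3 2, ?_, he0, hex, hfa, ?_⟩
    · rw [hcg, hcr]; decide
    · have hb : (decide ((Finset.univ.filter fun v => cfg qg qr 3 2 v = qr).card <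
          (Finset.univ.filter fun v => cfg qg qr 3 2 v = qg).card)) = true := by
        rw [hcg, hcr]; decide
      rw [hb]
      exact hnst


/-- No population protocol with exactly 3 states stably computes majority on every
connected interaction graph: for every 3-element state set `Q`, transition function `δ`,
distinct input states `qg ≠ qr` and output function `γ : Q → Bool` (`true` = "g wins",
`false` = "r wins"), there are a connected graph, an initial configuration using only
`qg, qr` with a strict majority, and a fair execution from it that never reaches a
configuration from which all reachable configurations output the initial majority. -/
theorem stmt_8 (Q : Type) [Fintype Q] [DecidableEq Q] (hQ : Fintype.card Q = 3)
    (δ : Q × Q → Q × Q) (qg qr : Q) (hgr : qg ≠ qr) (γ : Q → Bool) :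
    ∃ (n : ℕ) (G : SimpleGraph (Fin n)) (C0 : Fin n → Q) (e : ℕ → Fin n → Q),
      G.Connected ∧
      (∀ v : Fin n, C0 v = qg ∨ C0 v = qr) ∧
      (Finset.univ.filter fun v => C0 v = qg).card ≠
        (Finset.univ.filter fun v => C0 v = qr).card ∧
      e 0 = C0 ∧ PPExec G.Adj δ e ∧ PPFair G.Adj δ e ∧
      ∀ t : ℕ, ¬ PPStableOutput G.Adj δ γ
        (decide ((Finset.univ.filter fun v => C0 v = qr).card <
                 (Finset.univ.filter fun v => C0 v = qg).card)) (e t) := by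
  classical
  by_cases hg : γ qg = false
  · -- the protocol claims "r wins" on the all-g singleton population
    refine ⟨1, SimpleGraph.pathGraph 1, (fun _ => qg), (fun _ _ => qg),
      SimpleGraph.pathGraph_connected 0, fun _ => Or.inl rfl, ?_, rfl,
      fun _ => Or.inr rfl, ?_, ?_⟩
    · simp [hgr]
    · intro C C' hio hstep n
      obtain ⟨v, u, hvu, _⟩ := hstep
      exact absurd (Subsingleton.elim v u) hvu
    · intro t hst
      have hb : (decide ((Finset.univ.filter fun v : Fin 1 => qg = qr).card <
          (Finset.univ.filter fun v : Fin 1 => qg = qg).card)) = true := by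
        simp [hgr]
      have h' := hst (fun _ => qg) Relation.ReflTransGen.refl 0
      rw [hg, hb] at h'
      exact Bool.false_ne_true h'
  · by_cases hr : γ qr = true
    · -- the protocol claims "g wins" on the all-r singleton population
      refine ⟨1, SimpleGraph.pathGraph 1, (fun _ => qr), (fun _ _ => qr),
        SimpleGraph.pathGraph_connected 0, fun _ => Or.inr rfl, ?_, rfl,
        fun _ => Or.inr rfl, ?_, ?_⟩
      · simp [Ne.symm hgr]
      · intro C C' hio hstep n
        obtain ⟨v, u, hvu, _⟩ := hstep
        exact absurd (Subsingleton.elim v u) hvu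
      · intro t hst
        have hb : (decide ((Finset.univ.filter fun v : Fin 1 => qr = qr).card <
            (Finset.univ.filter fun v : Fin 1 => qr = qg).card)) = false := by
          simp [Ne.symm hgr]
        have h' := hst (fun _ => qr) Relation.ReflTransGen.refl 0
        rw [hr, hb] at h'
        exact absurd h' (by decide)
    · have hg' : γ qg = true := by revert hg; cases γ qg <;> simp
      have hr' : γ qr = false := by revert hr; cases γ qr <;> simp
      obtain ⟨x, hxg, hxr, henum⟩ := exists_third hQ hgr
      by_cases hx : γ x = true
      · -- `false` outputs only from state qr: swap the roles of g and r
        obtain ⟨n, G, C0, e, hconn, hvalid, hne, he0, hex, hfa, hnst⟩ :=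
          aux_main δ qr qg hgr.symm (fun q => !γ q) (fun q hq => by
            have hq' : γ q = false := by simpa using hq
            rcases henum q with h | h | h
            · rw [h, hg'] at hq'; exact absurd hq' (by decide)
            · exact h
            · rw [h, hx] at hq'; exact absurd hq' (by decide))
        refine ⟨n, G, C0, e, hconn, fun v => (hvalid v).symm, hne.symm, he0, hex, hfa, ?_⟩
        intro t hst
        apply hnst t
        intro C' hC' v
        show (!(γ (C' v))) = _
        rw [hst C' hC' v]
        exact bool_flip hne.symm
      · -- `true` outputs only from state qg
        have hx' : γ x = false := by revert hx; cases γ x <;> simp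
        exact aux_main δ qg qr hgr γ (fun q hq => by
          rcases henum q with h | h | h
          · exact h
          · rw [h, hr'] at hq; exact absurd hq (by decide)
          · rw [h, hx'] at hq; exact absurd hq (by decide))
end

section
/- For every connected undirected interaction graph G = (V, E) and every initial configuration C_0 of the 4-state ambassador protocol in which each vertex is in state (g,1) or (r,1) and the number of vertices in state (g,1) differs from the number in state (r,1), every fair execution starting from C_0 eventually reaches a configuration C such that in C and in every configuration reachable from C, the colour component of every vertex equals the initial majority colour. In other words, the ambassador protocol stably computes the initial majority value. -/
/-- States of the ambassador protocol: a colour (`true` = green `g`, `false` = red `r`)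
together with an ambassador bit (`true` = the vertex holds an ambassador). -/
abbrev AmbState : Type := Bool × Bool

/-- The transition function of the 4-state ambassador protocol: an ambassador moves to a
non-ambassador vertex and recolours it with its own colour; two opposite-coloured
ambassadors annihilate (colours unchanged); nothing else changes. -/
def ambDelta : AmbState × AmbState → AmbState × AmbState
  | ((c, true), (_, false)) => ((c, false), (c, true))
  | ((_, false), (c', true)) => ((c', true), (c', false))
  | ((c, true), (c', true)) =>
      if c = c' then ((c, true), (c', true)) else ((c, false), (c', false))
  | (s, s') => (s, s')

open Finset Function

set_option linter.unusedSectionVars false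

variable {V : Type} [Fintype V] [DecidableEq V] {G : SimpleGraph V}

def cnt (p : AmbState → Prop) [DecidablePred p] (C : V → AmbState) : ℕ :=
  (Finset.univ.filter fun z => p (C z)).card

lemma cnt_update2 (p : AmbState → Prop) [DecidablePred p] (C : V → AmbState)
    (v w : V) (x y : AmbState) (hvw : v ≠ w) :
    cnt p (Function.update (Function.update C v x) w y)
      + (if p (C v) then 1 else 0) + (if p (C w) then 1 else 0)
    = cnt p C + (if p x then 1 else 0) + (if p y then 1 else 0) := by
  classical
  have key : ∀ D : V → AmbState,
      cnt p D = (if p (D w) then 1 else 0) + (if p (D v) then 1 else 0)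
        + ((univ.erase w).erase v).sum (fun z => if p (D z) then 1 else 0) := by
    intro D
    rw [cnt, Finset.card_filter]
    rw [← Finset.add_sum_erase _ _ (mem_univ w),
        ← Finset.add_sum_erase _ _ (Finset.mem_erase.2 ⟨hvw, mem_univ v⟩)]
    ring
  rw [key, key]
  have h1 : (Function.update (Function.update C v x) w y) w = y := by simp
  have h2 : (Function.update (Function.update C v x) w y) v = x := by
    rw [Function.update_of_ne hvw, Function.update_self]
  have h3 : ∀ z ∈ (univ.erase w).erase v,
      (Function.update (Function.update C v x) w y) z = C z := by
    intro z hz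
    simp only [Finset.mem_erase] at hz
    rw [Function.update_of_ne hz.2.1, Function.update_of_ne hz.1]
  rw [h1, h2, Finset.sum_congr rfl (fun z hz => by rw [h3 z hz])]
  ring

lemma step_move (m c : Bool) {C : V → AmbState} {v w : V} (hadj : G.Adj v w)
    (hv : C v = (m, true)) (hw : C w = (c, false)) :
    PPStep G.Adj ambDelta C (Function.update (Function.update C v (m, false)) w (m, true)) := by
  refine ⟨v, w, hadj.ne, hadj, ?_, ?_⟩
  · rw [hv, hw, Function.update_of_ne hadj.ne, Function.update_self, Function.update_self]
    simp [ambDelta]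
  · intro z hzv hzw
    rw [Function.update_of_ne hzw, Function.update_of_ne hzv]

lemma step_annih (m : Bool) {C : V → AmbState} {v w : V} (hadj : G.Adj v w)
    (hv : C v = (m, true)) (hw : C w = (!m, true)) :
    PPStep G.Adj ambDelta C
      (Function.update (Function.update C v (m, false)) w (!m, false)) := by
  refine ⟨v, w, hadj.ne, hadj, ?_, ?_⟩
  · rw [hv, hw, Function.update_of_ne hadj.ne, Function.update_self, Function.update_self]
    simp [ambDelta]
  · intro z hzv hzw
    rw [Function.update_of_ne hzw, Function.update_of_ne hzv]

/-- number of minority (`!m`) ambassadors -/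
def aCnt (m : Bool) (C : V → AmbState) : ℕ := cnt (· = (!m, true)) C
/-- number of majority (`m`) ambassadors -/
def bCnt (m : Bool) (C : V → AmbState) : ℕ := cnt (· = (m, true)) C
/-- number of wrongly coloured vertices -/
def wCnt (m : Bool) (C : V → AmbState) : ℕ := cnt (fun s => s.1 = !m) C

abbrev Reach (G : SimpleGraph V) (C C' : V → AmbState) : Prop :=
  Relation.ReflTransGen (PPStep G.Adj ambDelta) C C'

/-- Phase 1 inner: a majority and a minority ambassador connected by a walk can annihilate. -/
lemma annihilate (m : Bool) : ∀ (n : ℕ) (C : V → AmbState) (v u : V) (p : G.Walk v u),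
    p.length = n → C v = (m, true) → C u = (!m, true) →
    ∃ C', Reach G C C' ∧ aCnt m C' + 1 = aCnt m C ∧ bCnt m C' + 1 = bCnt m C := by
  intro n
  induction n with
  | zero =>
    intro C v u p hlen hv hu
    have : v = u := p.eq_of_length_eq_zero hlen
    subst this
    rw [hv] at hu
    exact absurd (congrArg Prod.fst hu) (by simp)
  | succ n ih =>
    intro C v u p hlen hv hu
    cases p with
    | nil => simp at hlen
    | cons hadj q =>
      rename_i w
      simp only [SimpleGraph.Walk.length_cons, Nat.succ_injective.eq_iff] at hlen
      obtain ⟨c, b, hCw⟩ : ∃ c b, C w = (c, b) := ⟨(C w).1, (C w).2, rfl⟩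
      have hvu : v ≠ u := by
        intro h; subst h; rw [hv] at hu
        exact absurd (congrArg Prod.fst hu) (by simp)
      cases b with
      | false =>
        -- move the majority ambassador from v to w
        have hwu : w ≠ u := by
          intro h; subst h; rw [hCw] at hu
          exact absurd (congrArg Prod.snd hu) (by simp)
        set C1 := Function.update (Function.update C v (m, false)) w (m, true) with hC1
        have hstep : PPStep G.Adj ambDelta C C1 := step_move m c hadj hv hCw
        have hC1w : C1 w = (m, true) := by simp [hC1]
        have hC1u : C1 u = C u := by
          rw [hC1, Function.update_of_ne hwu.symm, Function.update_of_ne hvu.symm]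
        have ha : aCnt m C1 = aCnt m C := by
          have := cnt_update2 (· = ((!m, true) : AmbState)) C v w (m, false) (m, true) hadj.ne
          rw [← hC1] at this
          simp only [hv, hCw] at this
          simp only [aCnt]
          cases m <;> simp at this ⊢ <;> omega
        have hb : bCnt m C1 = bCnt m C := by
          have := cnt_update2 (· = ((m, true) : AmbState)) C v w (m, false) (m, true) hadj.ne
          rw [← hC1] at this
          simp only [hv, hCw] at this
          simp only [bCnt]
          cases m <;> simp at this ⊢ <;> omega
        obtain ⟨C', hr, ha', hb'⟩ := ih C1 w u q hlen hC1w (hC1u.trans hu)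
        exact ⟨C', Relation.ReflTransGen.head hstep hr, by omega, by omega⟩
      | true =>
        by_cases hcm : c = m
        · -- another majority ambassador sits at w: continue from w
          subst hcm
          have hwu : w ≠ u := by
            intro h; subst h; rw [hCw] at hu
            exact absurd (congrArg Prod.fst hu) (by simp)
          exact ih C w u q hlen hCw hu
        · -- a minority ambassador sits at w: annihilate
          have hc : c = !m := by
            cases c <;> cases m <;> simp_all
          subst hc
          set C1 := Function.update (Function.update C v (m, false)) w (!m, false) with hC1
          have hstep : PPStep G.Adj ambDelta C C1 := step_annih m hadj hv hCw
          have ha : aCnt m C1 + 1 = aCnt m C := by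
            have := cnt_update2 (· = ((!m, true) : AmbState)) C v w (m, false) (!m, false) hadj.ne
            rw [← hC1] at this
            simp only [hv, hCw] at this
            simp only [aCnt]
            cases m <;> simp at this ⊢ <;> omega
          have hb : bCnt m C1 + 1 = bCnt m C := by
            have := cnt_update2 (· = ((m, true) : AmbState)) C v w (m, false) (!m, false) hadj.ne
            rw [← hC1] at this
            simp only [hv, hCw] at this
            simp only [bCnt]
            cases m <;> simp at this ⊢ <;> omega
          exact ⟨C1, Relation.ReflTransGen.single hstep, ha, hb⟩

lemma cnt_eq_zero {p : AmbState → Prop} [DecidablePred p] {C : V → AmbState} :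
    cnt p C = 0 ↔ ∀ z, ¬ p (C z) := by
  simp [cnt, Finset.card_eq_zero, Finset.filter_eq_empty_iff]

lemma cnt_pos {p : AmbState → Prop} [DecidablePred p] {C : V → AmbState} :
    0 < cnt p C ↔ ∃ z, p (C z) := by
  simp [cnt, Finset.card_pos, Finset.filter_nonempty_iff]

lemma phase1 (m : Bool) (hconn : G.Connected) : ∀ (j : ℕ) (C : V → AmbState),
    aCnt m C ≤ j → aCnt m C < bCnt m C →
    ∃ C', Reach G C C' ∧ aCnt m C' = 0 ∧ aCnt m C' < bCnt m C' := by
  intro j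
  induction j with
  | zero =>
    intro C hj hlt
    exact ⟨C, Relation.ReflTransGen.refl, Nat.le_zero.1 hj, by omega⟩
  | succ j ih =>
    intro C hj hlt
    by_cases h0 : aCnt m C = 0
    · exact ⟨C, Relation.ReflTransGen.refl, h0, hlt⟩
    · obtain ⟨u, hu⟩ : ∃ z, C z = (!m, true) := cnt_pos.1 (Nat.pos_of_ne_zero h0)
      obtain ⟨v, hv⟩ : ∃ z, C z = (m, true) := cnt_pos.1 (Nat.lt_of_le_of_lt (Nat.zero_le _) hlt)
      obtain ⟨p⟩ := hconn.preconnected v u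
      obtain ⟨C1, hr1, ha1, hb1⟩ := annihilate m p.length C v u p rfl hv hu
      obtain ⟨C', hr2, ha2, hb2⟩ := ih C1 (by omega) (by omega)
      exact ⟨C', hr1.trans hr2, ha2, hb2⟩

lemma recolor (m : Bool) : ∀ (n : ℕ) (C : V → AmbState) (v u : V) (p : G.Walk v u),
    p.length = n → aCnt m C = 0 → C v = (m, true) → (C u).1 = !m →
    ∃ C', Reach G C C' ∧ aCnt m C' = 0 ∧ wCnt m C' < wCnt m C ∧ 0 < bCnt m C' := by
  intro n
  induction n with
  | zero =>
    intro C v u p hlen h0 hv hu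
    have : v = u := p.eq_of_length_eq_zero hlen
    subst this
    rw [hv] at hu
    simp at hu
  | succ n ih =>
    intro C v u p hlen h0 hv hu
    cases p with
    | nil => simp at hlen
    | cons hadj q =>
      rename_i w
      simp only [SimpleGraph.Walk.length_cons, Nat.succ_injective.eq_iff] at hlen
      obtain ⟨c, b, hCw⟩ : ∃ c b, C w = (c, b) := ⟨(C w).1, (C w).2, rfl⟩
      have hvu : v ≠ u := by
        intro h; subst h; rw [hv] at hu; simp at hu
      cases b with
      | true =>
        -- w carries an ambassador; since no minority ambassadors, it is a majority one
        have hc : c = m := by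
          by_contra hc
          have : c = !m := by cases c <;> cases m <;> simp_all
          exact (cnt_eq_zero.1 h0 w) (by rw [hCw, this])
        subst hc
        have hwu : w ≠ u := by
          intro h; subst h; rw [hCw] at hu; simp at hu
        exact ih C w u q hlen h0 hCw hu
      | false =>
        set C1 := Function.update (Function.update C v (m, false)) w (m, true) with hC1
        have hstep : PPStep G.Adj ambDelta C C1 := step_move m c hadj hv hCw
        have hC1w : C1 w = (m, true) := by simp [hC1]
        have ha1 : aCnt m C1 = 0 := by
          have := cnt_update2 (· = ((!m, true) : AmbState)) C v w (m, false) (m, true) hadj.ne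
          rw [← hC1] at this
          simp only [hv, hCw] at this
          simp only [aCnt] at h0 ⊢
          cases m <;> simp at this h0 ⊢ <;> omega
        have hb1 : 0 < bCnt m C1 := cnt_pos.2 ⟨w, hC1w⟩
        rcases eq_or_ne w u with rfl | hwu
        · -- final move recolours u
          have hwc : wCnt m C1 < wCnt m C := by
            have := cnt_update2 (fun s => s.1 = !m) C v w (m, false) (m, true) hadj.ne
            rw [← hC1] at this
            simp only [hv, hCw] at this
            have hcu : c = !m := by rw [hCw] at hu; exact hu
            subst hcu
            simp only [wCnt]
            cases m <;> simp at this ⊢ <;> omega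
          exact ⟨C1, Relation.ReflTransGen.single hstep, ha1, hwc, hb1⟩
        · have hC1u : C1 u = C u := by
            rw [hC1, Function.update_of_ne hwu.symm, Function.update_of_ne hvu.symm]
          have hwc : wCnt m C1 ≤ wCnt m C := by
            have := cnt_update2 (fun s => s.1 = !m) C v w (m, false) (m, true) hadj.ne
            rw [← hC1] at this
            simp only [hv, hCw] at this
            simp only [wCnt]
            cases m <;> simp at this ⊢ <;> omega
          obtain ⟨C', hr, h0', hwc', hb'⟩ := ih C1 w u q hlen ha1 hC1w (by rw [hC1u]; exact hu)
          exact ⟨C', Relation.ReflTransGen.head hstep hr, h0', by omega, hb'⟩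

lemma phase2 (m : Bool) (hconn : G.Connected) : ∀ (k : ℕ) (C : V → AmbState),
    wCnt m C ≤ k → aCnt m C = 0 → 0 < bCnt m C →
    ∃ C', Reach G C C' ∧ ∀ z, (C' z).1 = m := by
  intro k
  induction k with
  | zero =>
    intro C hk h0 hb
    refine ⟨C, Relation.ReflTransGen.refl, fun z => ?_⟩
    have := cnt_eq_zero.1 (Nat.le_zero.1 hk) z
    cases hz : (C z).1 <;> cases m <;> simp_all
  | succ k ih =>
    intro C hk h0 hb
    by_cases hw0 : wCnt m C = 0
    · refine ⟨C, Relation.ReflTransGen.refl, fun z => ?_⟩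
      have := cnt_eq_zero.1 hw0 z
      cases hz : (C z).1 <;> cases m <;> simp_all
    · obtain ⟨u, hu⟩ : ∃ z, (C z).1 = !m := cnt_pos.1 (Nat.pos_of_ne_zero hw0)
      obtain ⟨v, hv⟩ : ∃ z, C z = (m, true) := cnt_pos.1 hb
      obtain ⟨p⟩ := hconn.preconnected v u
      obtain ⟨C1, hr1, h01, hw1, hb1⟩ := recolor m p.length C v u p rfl h0 hv hu
      obtain ⟨C', hr2, hmono⟩ := ih C1 (by omega) h01 hb1
      exact ⟨C', hr1.trans hr2, hmono⟩

lemma reachMono (m : Bool) (hconn : G.Connected) (C : V → AmbState)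
    (h : aCnt m C < bCnt m C) :
    ∃ C', Reach G C C' ∧ ∀ z, (C' z).1 = m := by
  obtain ⟨C1, hr1, h0, hlt⟩ := phase1 m hconn (aCnt m C) C le_rfl h
  obtain ⟨C', hr2, hmono⟩ := phase2 m hconn (wCnt m C1) C1 le_rfl h0 (by omega)
  exact ⟨C', hr1.trans hr2, hmono⟩

lemma step_pres (m : Bool) {C C' : V → AmbState} (h : PPStep G.Adj ambDelta C C')
    (hlt : aCnt m C < bCnt m C) : aCnt m C' < bCnt m C' := by
  obtain ⟨v, u, hvu, -, heq, hoth⟩ := h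
  have hC' : C' = Function.update (Function.update C v (C' v)) u (C' u) := by
    funext z
    rcases eq_or_ne z u with rfl | hzu
    · simp
    · rw [Function.update_of_ne hzu]
      rcases eq_or_ne z v with rfl | hzv
      · simp
      · rw [Function.update_of_ne hzv]; exact hoth z hzv hzu
  have ha := cnt_update2 (· = ((!m, true) : AmbState)) C v u (C' v) (C' u) hvu
  have hb := cnt_update2 (· = ((m, true) : AmbState)) C v u (C' v) (C' u) hvu
  rw [← hC'] at ha hb
  obtain ⟨c1, b1, h1⟩ : ∃ c b, C v = (c, b) := ⟨(C v).1, (C v).2, rfl⟩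
  obtain ⟨c2, b2, h2⟩ : ∃ c b, C u = (c, b) := ⟨(C u).1, (C u).2, rfl⟩
  rw [h1, h2] at heq ha hb
  simp only [aCnt, bCnt] at hlt ⊢
  cases b1 <;> cases b2 <;> cases c1 <;> cases c2 <;> cases m <;>
    simp [ambDelta] at heq <;>
    obtain ⟨e1, e2⟩ := heq <;>
    rw [e1, e2] at ha hb <;>
    simp at ha hb hlt ⊢ <;> omega

lemma mono_step (m : Bool) {C C' : V → AmbState} (h : PPStep G.Adj ambDelta C C')
    (hm : ∀ z, (C z).1 = m) : ∀ z, (C' z).1 = m := by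
  obtain ⟨v, u, hvu, -, heq, hoth⟩ := h
  intro z
  rcases eq_or_ne z v with rfl | hzv
  · have e1 := congrArg Prod.fst heq
    have h1 : C z = (m, (C z).2) := by
      have := hm z; exact Prod.ext this rfl
    have h2 : C u = (m, (C u).2) := by
      have := hm u; exact Prod.ext this rfl
    rw [h1, h2] at e1
    obtain ⟨b1⟩ : ∃ b, (C z).2 = b := ⟨_, rfl⟩
    cases hb1 : (C z).2 <;> cases hb2 : (C u).2 <;> rw [hb1, hb2] at e1 <;>
      simp [ambDelta] at e1 <;> simp [e1]
  · rcases eq_or_ne z u with rfl | hzu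
    · have e2 := congrArg Prod.snd heq
      have h1 : C v = (m, (C v).2) := Prod.ext (hm v) rfl
      have h2 : C z = (m, (C z).2) := Prod.ext (hm z) rfl
      rw [h1, h2] at e2
      cases hb1 : (C v).2 <;> cases hb2 : (C z).2 <;> rw [hb1, hb2] at e2 <;>
        simp [ambDelta] at e2 <;> simp [e2]
    · rw [hoth z hzv hzu]; exact hm z

lemma mono_reach (m : Bool) {C C' : V → AmbState} (h : Reach G C C')
    (hm : ∀ z, (C z).1 = m) : ∀ z, (C' z).1 = m := by
  induction h with
  | refl => exact hm
  | tail _ hstep ih => exact mono_step m hstep ih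


/-- The ambassador protocol stably computes majority: on any finite connected undirected
graph, starting from a configuration in which every vertex holds an ambassador and the
numbers of green and red vertices differ, every fair execution eventually reaches a
configuration from which every reachable configuration (including itself) has every
vertex coloured with the initial majority colour. -/
theorem stmt_9 {V : Type} [Fintype V] [DecidableEq V] (G : SimpleGraph V)
    (hconn : G.Connected) (C0 : V → AmbState)
    (hamb : ∀ v : V, (C0 v).2 = true)
    (hmaj : (Finset.univ.filter fun v => (C0 v).1 = true).card ≠
            (Finset.univ.filter fun v => (C0 v).1 = false).card)
    (e : ℕ → V → AmbState) (he0 : e 0 = C0)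
    (hexec : PPExec G.Adj ambDelta e) (hfair : PPFair G.Adj ambDelta e) :
    ∃ t : ℕ, ∀ C' : V → AmbState,
      Relation.ReflTransGen (PPStep G.Adj ambDelta) (e t) C' →
      ∀ v : V, (C' v).1 =
        decide ((Finset.univ.filter fun v => (C0 v).1 = false).card <
                (Finset.univ.filter fun v => (C0 v).1 = true).card) := by
  classical
  set m : Bool := decide ((Finset.univ.filter fun v => (C0 v).1 = false).card <
                (Finset.univ.filter fun v => (C0 v).1 = true).card) with hm
  -- counting at C0
  have hcnt : ∀ c : Bool, cnt (· = ((c, true) : AmbState)) C0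
      = (Finset.univ.filter fun v => (C0 v).1 = c).card := by
    intro c
    unfold cnt
    congr 1
    apply Finset.filter_congr
    intro z _
    constructor
    · intro h; rw [h]
    · intro h; exact Prod.ext h (hamb z)
  -- the invariant holds initially
  have hinit : aCnt m C0 < bCnt m C0 := by
    unfold aCnt bCnt
    rw [hcnt, hcnt]
    rcases Nat.lt_or_ge (Finset.univ.filter fun v => (C0 v).1 = false).card
      (Finset.univ.filter fun v => (C0 v).1 = true).card with h | h
    · have : m = true := by simp [hm, h]
      rw [this]; simpa using h
    · have hlt : (Finset.univ.filter fun v => (C0 v).1 = true).card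
        < (Finset.univ.filter fun v => (C0 v).1 = false).card := by omega
      have : m = false := by simp [hm]; omega
      rw [this]; simpa using hlt
  -- the invariant holds along the execution
  have hinv : ∀ t, aCnt m (e t) < bCnt m (e t) := by
    intro t
    induction t with
    | zero => rw [he0]; exact hinit
    | succ t ih =>
      rcases hexec t with h | h
      · exact step_pres m h ih
      · rw [h]; exact ih
  -- some configuration occurs infinitely often
  obtain ⟨C, hC0⟩ := Finite.exists_infinite_fiber e
  have hC : (e ⁻¹' {C}).Infinite := Set.infinite_coe_iff.mp hC0
  have hCinf : ∀ n : ℕ, ∃ t : ℕ, n ≤ t ∧ e t = C := by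
    intro n
    obtain ⟨t, ht, hnt⟩ := hC.exists_gt n
    exact ⟨t, le_of_lt hnt, ht⟩
  -- the invariant holds at C
  have hCinv : aCnt m C < bCnt m C := by
    obtain ⟨t, -, ht⟩ := hCinf 0
    rw [← ht]; exact hinv t
  -- reach a monochromatic configuration from C
  obtain ⟨Cm, hr, hmono⟩ := reachMono m hconn C hCinv
  -- Cm also occurs infinitely often, by fairness
  have hCminf : ∀ n : ℕ, ∃ t : ℕ, n ≤ t ∧ e t = Cm := by
    clear hCinv hmono
    induction hr with
    | refl => exact hCinf
    | tail _ hstep ih => exact hfair _ _ ih hstep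
  obtain ⟨t, -, ht⟩ := hCminf 0
  refine ⟨t, fun C' hr' v => ?_⟩
  rw [ht] at hr'
  exact mono_reach m hr' hmono v
end

section
/- Along any execution of the 4-state ambassador protocol on any interaction graph, the quantity (number of vertices in state (g,1)) − (number of vertices in state (r,1)) is invariant: if configuration C' is directly reachable from configuration C, then |{v : C'(v) = (g,1)}| − |{v : C'(v) = (r,1)}| = |{v : C(v) = (g,1)}| − |{v : C(v) = (r,1)}|. In particular, at any step of any execution this difference equals the difference between the initial number of green ambassadors and the initial number of red ambassadors. -/
/-- Weight of a state: +1 for a green ambassador, −1 for a red ambassador, 0 else. -/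
def ambW : AmbState → ℤ
  | (true, true) => 1
  | (false, true) => -1
  | _ => 0

lemma ambW_delta (p : AmbState × AmbState) :
    ambW (ambDelta p).1 + ambW (ambDelta p).2 = ambW p.1 + ambW p.2 := by
  obtain ⟨⟨a, b⟩, ⟨c, d⟩⟩ := p
  revert a b c d; decide

lemma ambW_eq (q : AmbState) :
    ambW q = (if q = (true, true) then (1:ℤ) else 0) -
      (if q = (false, true) then (1:ℤ) else 0) := by
  revert q; decide

lemma sum_ambW {V : Type} [Fintype V] [DecidableEq V] (C : V → AmbState) :
    ∑ v, ambW (C v) =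
      ((Finset.univ.filter fun v => C v = (true, true)).card : ℤ) -
        ((Finset.univ.filter fun v => C v = (false, true)).card : ℤ) := by
  simp only [ambW_eq, Finset.sum_sub_distrib, Finset.sum_ite_eq, Finset.sum_boole]

/-- The crucial invariant of the ambassador protocol: the difference between the number
of green ambassadors (state `(g,1)`) and red ambassadors (state `(r,1)`) is preserved by
every interaction step, on any interaction graph. -/
theorem stmt_10 {V : Type} [Fintype V] [DecidableEq V] (E : V → V → Prop)
    (C C' : V → AmbState) (hstep : PPStep E ambDelta C C') :
    ((Finset.univ.filter fun v => C' v = (true, true)).card : ℤ) -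
      ((Finset.univ.filter fun v => C' v = (false, true)).card : ℤ) =
    ((Finset.univ.filter fun v => C v = (true, true)).card : ℤ) -
      ((Finset.univ.filter fun v => C v = (false, true)).card : ℤ) := by
  obtain ⟨v, u, hvu, _, hδ, hfix⟩ := hstep
  rw [← sum_ambW, ← sum_ambW]
  have hsub : ({v, u} : Finset V) ⊆ Finset.univ := Finset.subset_univ _
  have key : ∑ w ∈ ({v, u} : Finset V), (ambW (C' w) - ambW (C w)) = 0 := by
    rw [Finset.sum_pair hvu]
    have h1 : C' v = (ambDelta (C v, C u)).1 := by rw [← hδ]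
    have h2 : C' u = (ambDelta (C v, C u)).2 := by rw [← hδ]
    have h3 := ambW_delta (C v, C u)
    simp only [] at h3
    rw [h1, h2]; omega
  have htot : ∑ w, (ambW (C' w) - ambW (C w)) = 0 :=
    (Finset.sum_subset hsub (by
      intro w _ hw
      simp only [Finset.mem_insert, Finset.mem_singleton, not_or] at hw
      rw [hfix w hw.1 hw.2]; ring)).symm.trans key
  rw [Finset.sum_sub_distrib] at htot
  omega
end

section
/- Let G = (V, E) be a connected undirected graph and let C be a configuration of the 4-state ambassador protocol on G containing at least one vertex in state (g,1) and at least one vertex in state (r,1). Then there exists a finite sequence of configurations C = C^0, C^1, …, C^s, each directly reachable from the previous one, such that C^s has exactly one fewer vertex in state (g,1) and exactly one fewer vertex in state (r,1) than C has. -/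
section Aux
variable {V : Type} [Fintype V] [DecidableEq V]

lemma filt_update_erase (C : V → AmbState) (v : V) (s t : AmbState)
    (hst : s ≠ t) (hv : C v = t) :
    (Finset.univ.filter fun x => Function.update C v s x = t) =
    (Finset.univ.filter fun x => C x = t).erase v := by
  ext x
  by_cases hx : x = v <;> simp [hx, Function.update_apply, hst, hv]

lemma filt_update_insert (C : V → AmbState) (v : V) (t : AmbState)
    (hv : C v ≠ t) :
    (Finset.univ.filter fun x => Function.update C v t x = t) =
    insert v (Finset.univ.filter fun x => C x = t) := by
  ext x
  by_cases hx : x = v <;> simp [hx, Function.update_apply, hv]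

lemma filt_update_same (C : V → AmbState) (v : V) (s t : AmbState)
    (hst : s ≠ t) (hv : C v ≠ t) :
    (Finset.univ.filter fun x => Function.update C v s x = t) =
    (Finset.univ.filter fun x => C x = t) := by
  ext x
  by_cases hx : x = v <;> simp [hx, Function.update_apply, hst, hv]

lemma amb_main {V : Type} [Fintype V] [DecidableEq V] (G : SimpleGraph V)
    {v u : V} (p : G.Walk v u) :
    ∀ C : V → AmbState, C v = (true, true) → C u = (false, true) →
    ∃ C' : V → AmbState,
      Relation.ReflTransGen (PPStep G.Adj ambDelta) C C' ∧
      (Finset.univ.filter fun x => C' x = (true, true)).card + 1 =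
        (Finset.univ.filter fun x => C x = (true, true)).card ∧
      (Finset.univ.filter fun x => C' x = (false, true)).card + 1 =
        (Finset.univ.filter fun x => C x = (false, true)).card := by
  induction p with
  | nil =>
    intro C hv hu
    rw [hv] at hu; simp at hu
  | @cons v w u h q ih =>
    intro C hv hu
    have hvw : v ≠ w := G.ne_of_adj h
    have huv : u ≠ v := by intro e; rw [e, hv] at hu; simp at hu
    rcases hcw : C w with ⟨cw, bw⟩
    cases bw with
    | true =>
      cases cw with
      | true =>
        -- green ambassador at w already; recurse with same C
        exact ih C hcw hu
      | false =>
        -- red ambassador at w: annihilate along edge v-w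
        set C' := Function.update (Function.update C v (true, false)) w (false, false) with hC'
        refine ⟨C', Relation.ReflTransGen.single ⟨v, w, hvw, h, ?_, ?_⟩, ?_, ?_⟩
        · rw [hv, hcw]
          simp [hC', Function.update_apply, hvw, ambDelta]
        · intro x hxv hxw
          simp [hC', Function.update_apply, hxv, hxw]
        · -- green count
          have h1 : (Finset.univ.filter fun x => C' x = (true, true)) =
              (Finset.univ.filter fun x => C x = (true, true)).erase v := by
            rw [hC', filt_update_same _ _ _ _ (by decide)
              (by rw [Function.update_of_ne hvw.symm, hcw]; decide),
              filt_update_erase _ _ _ _ (by decide) hv]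
          rw [h1, Finset.card_erase_add_one (by simp [hv])]
        · -- red count
          have h1 : (Finset.univ.filter fun x => C' x = (false, true)) =
              (Finset.univ.filter fun x => C x = (false, true)).erase w := by
            rw [hC', filt_update_erase _ _ _ _ (by decide)
              (by rw [Function.update_of_ne hvw.symm, hcw]),
              filt_update_same _ _ _ _ (by decide) (by simp [hv])]
          rw [h1, Finset.card_erase_add_one (by simp [hcw])]
    | false =>
      -- no ambassador at w: move the green ambassador from v to w
      have huw : u ≠ w := by intro e; rw [e, hcw] at hu; simp at hu
      set C₂ := Function.update (Function.update C v (true, false)) w (true, true) with hC₂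
      have hstep : PPStep G.Adj ambDelta C C₂ := by
        refine ⟨v, w, hvw, h, ?_, ?_⟩
        · rw [hv, hcw]
          simp [hC₂, Function.update_apply, hvw, ambDelta]
        · intro x hxv hxw
          simp [hC₂, Function.update_apply, hxv, hxw]
      have h2w : C₂ w = (true, true) := by simp [hC₂]
      have h2u : C₂ u = (false, true) := by
        simp [hC₂, Function.update_apply, huw, huv, hu]
      obtain ⟨C', hchain, hgc, hrc⟩ := ih C₂ h2w h2u
      have hgreen : (Finset.univ.filter fun x => C₂ x = (true, true)).card =
          (Finset.univ.filter fun x => C x = (true, true)).card := by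
        rw [hC₂, filt_update_insert _ _ _
            (by rw [Function.update_of_ne hvw.symm, hcw]; simp),
          filt_update_erase _ _ _ _ (by decide) hv,
          Finset.card_insert_of_notMem (by simp [hcw]), Finset.card_erase_add_one (by simp [hv])]
      have hred : (Finset.univ.filter fun x => C₂ x = (false, true)).card =
          (Finset.univ.filter fun x => C x = (false, true)).card := by
        rw [hC₂, filt_update_same _ _ _ _ (by decide)
            (by rw [Function.update_of_ne hvw.symm, hcw]; simp),
          filt_update_same _ _ _ _ (by decide) (by simp [hv])]
      exact ⟨C', hchain.head hstep, by omega, by omega⟩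

end Aux

/-- From any configuration of the ambassador protocol on a connected graph containing at
least one green ambassador and at least one red ambassador, a finite chain of interaction
steps reaches a configuration with exactly one fewer green ambassador and exactly one
fewer red ambassador. -/


theorem stmt_11 {V : Type} [Fintype V] [DecidableEq V] (G : SimpleGraph V)
    (hconn : G.Connected) (C : V → AmbState)
    (hg : ∃ v : V, C v = (true, true)) (hr : ∃ v : V, C v = (false, true)) :
    ∃ C' : V → AmbState,
      Relation.ReflTransGen (PPStep G.Adj ambDelta) C C' ∧
      (Finset.univ.filter fun v => C' v = (true, true)).card + 1 =
        (Finset.univ.filter fun v => C v = (true, true)).card ∧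
      (Finset.univ.filter fun v => C' v = (false, true)).card + 1 =
        (Finset.univ.filter fun v => C v = (false, true)).card := by
  obtain ⟨v, hv⟩ := hg
  obtain ⟨u, hu⟩ := hr
  obtain ⟨p⟩ := hconn v u
  exact amb_main G p C hv hu
end

section
/- Let G = (V, E) be a connected undirected graph and let C be a configuration of the 4-state ambassador protocol on G containing at least one vertex in state (g,1) and no vertex in state (r,1). Then there exists a finite sequence of configurations C = C^0, C^1, …, C^s, each directly reachable from the previous one, such that in C^s every vertex has colour component g (i.e. every vertex is in state (g,0) or (g,1)). -/
/-- Walking a green ambassador along a path greens the path and never un-greens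
any vertex, while preserving the invariant that all ambassadors are green. -/
lemma amb_walk_green {V : Type} [DecidableEq V] (G : SimpleGraph V) {v u : V}
    (p : G.Walk v u) :
    ∀ C : V → AmbState, (∀ w, (C w).2 = true → (C w).1 = true) → C v = (true, true) →
    ∃ C', Relation.ReflTransGen (PPStep G.Adj ambDelta) C C' ∧
      (∀ w, (C' w).2 = true → (C' w).1 = true) ∧
      (∀ w, (C w).1 = true → (C' w).1 = true) ∧ C' u = (true, true) := by
  induction p with
  | nil =>
    intro C hI hv
    exact ⟨C, .refl, hI, fun _ h => h, hv⟩
  | @cons a b u h q ih =>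
    intro C hI hv
    by_cases hb : (C b).2 = true
    · have hCb : C b = (true, true) := Prod.ext (hI b hb) hb
      exact ih C hI hCb
    · have hb' : (C b).2 = false := by simpa using hb
      have hab : a ≠ b := G.ne_of_adj h
      set C₁ : V → AmbState :=
        fun x => if x = a then (true, false) else if x = b then (true, true) else C x
        with hC₁
      have hd : ambDelta (C a, C b) = ((true, false), (true, true)) := by
        rw [hv]
        rcases hcb : C b with ⟨c, d⟩
        rw [hcb] at hb'
        cases d
        · rfl
        · simp at hb'
      have hC₁a : C₁ a = (true, false) := by simp [hC₁]
      have hC₁b : C₁ b = (true, true) := by simp [hC₁, hab.symm]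
      have hstep : PPStep G.Adj ambDelta C C₁ := by
        refine ⟨a, b, hab, h, ?_, ?_⟩
        · rw [hC₁a, hC₁b, hd]
        · intro w hwa hwb; simp [hC₁, hwa, hwb]
      have hI₁ : ∀ w, (C₁ w).2 = true → (C₁ w).1 = true := by
        intro w
        by_cases hwa : w = a
        · subst hwa; rw [hC₁a]; intro hx; exact rfl
        by_cases hwb : w = b
        · subst hwb; rw [hC₁b]; intro _; rfl
        · have : C₁ w = C w := by simp [hC₁, hwa, hwb]
          rw [this]; exact hI w
      obtain ⟨C', hrtg, hI', hmono, hu⟩ := ih C₁ hI₁ hC₁b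
      refine ⟨C', Relation.ReflTransGen.head hstep hrtg, hI', ?_, hu⟩
      intro w hw
      apply hmono
      by_cases hwa : w = a
      · subst hwa; rw [hC₁a]
      by_cases hwb : w = b
      · subst hwb; rw [hC₁b]
      · have : C₁ w = C w := by simp [hC₁, hwa, hwb]
        rw [this]; exact hw

/-- From any configuration of the ambassador protocol on a connected graph containing at
least one green ambassador and no red ambassador, a finite chain of interaction steps
reaches a configuration in which every vertex is coloured green. -/
theorem stmt_12 {V : Type} [Fintype V] [DecidableEq V] (G : SimpleGraph V)
    (hconn : G.Connected) (C : V → AmbState)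
    (hg : ∃ v : V, C v = (true, true)) (hr : ∀ v : V, C v ≠ (false, true)) :
    ∃ C' : V → AmbState,
      Relation.ReflTransGen (PPStep G.Adj ambDelta) C C' ∧
      ∀ v : V, (C' v).1 = true := by
  obtain ⟨v0, hv0⟩ := hg
  have hI : ∀ w, (C w).2 = true → (C w).1 = true := by
    intro w hw
    by_contra hcol
    exact hr w (Prod.ext (by simpa using hcol) hw)
  have key : ∀ S : Finset V, ∃ C' : V → AmbState,
      Relation.ReflTransGen (PPStep G.Adj ambDelta) C C' ∧
      (∀ w, (C' w).2 = true → (C' w).1 = true) ∧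
      (∃ a, C' a = (true, true)) ∧ ∀ v ∈ S, (C' v).1 = true := by
    intro S
    induction S using Finset.induction with
    | empty => exact ⟨C, .refl, hI, ⟨v0, hv0⟩, by simp⟩
    | @insert x S hx ihS =>
      obtain ⟨C1, r1, I1, ⟨a, ha⟩, hS⟩ := ihS
      obtain ⟨p⟩ := hconn.preconnected a x
      obtain ⟨C2, r2, I2, hmono, hx2⟩ := amb_walk_green G p C1 I1 ha
      refine ⟨C2, r1.trans r2, I2, ⟨x, hx2⟩, ?_⟩
      intro v hv
      rcases Finset.mem_insert.mp hv with rfl | hv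
      · rw [hx2]
      · exact hmono v (hS v hv)
  obtain ⟨C', hrtg, _, _, hall⟩ := key Finset.univ
  exact ⟨C', hrtg, fun v => hall v (Finset.mem_univ v)⟩
end
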